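/- arXiv:2510.12804 — 2 statements merged into one kernel-verified Lean document; each statement's English description precedes it below -/
import Mathlib

section
/- Let h ∈ C²(C_θ) satisfy ∇_μ h = cot θ · h on ∂C_θ, and set u := h/l where l(ξ) := sin²θ + cos θ·⟨ξ, e⟩. Then ∇_μ u = 0 on ∂C_θ, and along ∂C_θ, for any orthonormal frame e_1, …, e_n on C_θ with e_n = μ, one has ∇²u(e_k, e_n) = -cot θ · ∇_{e_k} u for all k = 1, …, n-1. -/
/- Formalization of statements from "The L_p dual Minkowski problem for capillary
hypersurfaces".

We work in the ambient space `ℝ^{n+1}`.  The spherical cap `C_θ` is the part of the unit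
sphere centred at `cos θ • e` (where `e = -E_{n+1}`) lying in the closed upper half-space.
Functions on `C_θ` are represented by ambient functions `h : Euc n → ℝ`; the intrinsic
(round-metric) gradient `∇h` and Hessian `∇²h` of the restriction of `h` to `C_θ` are
expressed through ambient derivatives (for tangential arguments these expressions depend
only on the restriction of `h` to the cap).  The quantity `det(∇²h + hσ)` is encoded as the
determinant of the endomorphism of `ℝ^{n+1}` acting as `∇²h + hσ` on the tangent space of
the cap and as the identity on the normal line. -/

open Real Set
open scoped RealInnerProductSpace

noncomputable section

/-- Ambient Euclidean space `ℝ^{n+1}`. -/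
abbrev Euc (n : ℕ) : Type := EuclideanSpace ℝ (Fin (n + 1))

/-- The unit vector `e = -E_{n+1}`. -/
def eVec (n : ℕ) : Euc n := -(EuclideanSpace.single (Fin.last n) (1 : ℝ))

/-- `ν(ξ) = ξ - cos θ • e`, the unit normal (at `ξ`) of the sphere containing the cap `C_θ`. -/
def sphNormal (n : ℕ) (θ : ℝ) (ξ : Euc n) : Euc n := ξ - Real.cos θ • eVec n

/-- The spherical cap `C_θ = {ξ ∈ closure ℝ^{n+1}_+ : |ξ - cos θ • e| = 1}`. -/
def cap (n : ℕ) (θ : ℝ) : Set (Euc n) :=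
  {ξ | 0 ≤ ξ (Fin.last n) ∧ ‖sphNormal n θ ξ‖ = 1}

/-- The boundary `∂C_θ`. -/
def capBdry (n : ℕ) (θ : ℝ) : Set (Euc n) :=
  {ξ | ξ (Fin.last n) = 0 ∧ ‖sphNormal n θ ξ‖ = 1}

/-- The outward unit conormal `μ` of `∂C_θ` in `C_θ` (at boundary points). -/
def conormal (n : ℕ) (θ : ℝ) (ξ : Euc n) : Euc n :=
  Real.cot θ • ξ + Real.sin θ • eVec n

/-- Orthogonal projection of `ℝ^{n+1}` onto the tangent space of the cap at `ξ`. -/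
def tproj (n : ℕ) (θ : ℝ) (ξ : Euc n) : Euc n →L[ℝ] Euc n :=
  ContinuousLinearMap.id ℝ (Euc n) - (innerSL ℝ (sphNormal n θ ξ)).smulRight (sphNormal n θ ξ)

/-- `X` is tangent to the cap at `ξ`. -/
def IsTangent (n : ℕ) (θ : ℝ) (ξ X : Euc n) : Prop :=
  ⟪X, sphNormal n θ ξ⟫ = 0

/-- Intrinsic (round-metric) gradient `∇h` of `h` on the cap. -/
def sgrad (n : ℕ) (θ : ℝ) (h : Euc n → ℝ) (ξ : Euc n) : Euc n :=
  tproj n θ ξ (gradient h ξ)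

/-- Intrinsic (round-metric) Hessian `∇²h(X,Y)` of `h` on the cap (tangential arguments). -/
def shess (n : ℕ) (θ : ℝ) (h : Euc n → ℝ) (ξ X Y : Euc n) : ℝ :=
  ⟪(fderiv ℝ (gradient h) ξ) X, Y⟫ - ⟪gradient h ξ, sphNormal n θ ξ⟫ * ⟪X, Y⟫

/-- Endomorphism representing the intrinsic Hessian `∇²h` on tangent vectors
(and vanishing on the normal line). -/
def thessOp (n : ℕ) (θ : ℝ) (h : Euc n → ℝ) (ξ : Euc n) : Euc n →L[ℝ] Euc n :=
  ((tproj n θ ξ).comp ((fderiv ℝ (gradient h) ξ).comp (tproj n θ ξ)))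
    - ⟪gradient h ξ, sphNormal n θ ξ⟫ • tproj n θ ξ

/-- Rank-one projection onto the normal direction at `ξ`. -/
def normalPart (n : ℕ) (θ : ℝ) (ξ : Euc n) : Euc n →L[ℝ] Euc n :=
  (innerSL ℝ (sphNormal n θ ξ)).smulRight (sphNormal n θ ξ)

/-- Endomorphism acting as `∇²h + hσ` on the tangent space and as the identity on the
normal line. -/
def hessOp (n : ℕ) (θ : ℝ) (h : Euc n → ℝ) (ξ : Euc n) : Euc n →L[ℝ] Euc n :=
  thessOp n θ h ξ + h ξ • tproj n θ ξ + normalPart n θ ξ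

/-- `det(∇²h + hσ)` at `ξ`. -/
def sdet (n : ℕ) (θ : ℝ) (h : Euc n → ℝ) (ξ : Euc n) : ℝ :=
  LinearMap.det (hessOp n θ h ξ).toLinearMap

/-- `h > 0` on the cap. -/
def PosOnCap (n : ℕ) (θ : ℝ) (h : Euc n → ℝ) : Prop := ∀ ξ ∈ cap n θ, 0 < h ξ

/-- Convexity of a solution: `∇²h + hσ > 0` on the cap. -/
def IsConvexSol (n : ℕ) (θ : ℝ) (h : Euc n → ℝ) : Prop :=
  ∀ ξ ∈ cap n θ, ∀ X : Euc n, IsTangent n θ ξ X → X ≠ 0 →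
    0 < shess n θ h ξ X X + h ξ * ⟪X, X⟫

/-- The right-hand side `f·h^{p-1}·(h² + |∇h|²)^{(n+1-q)/2}`. -/
def eqRHS (n : ℕ) (θ p q : ℝ) (f h : Euc n → ℝ) (ξ : Euc n) : ℝ :=
  f ξ * h ξ ^ (p - 1) * (h ξ ^ 2 + ‖sgrad n θ h ξ‖ ^ 2) ^ (((n : ℝ) + 1 - q) / 2)

/-- `h` solves `det(∇²h + hσ) = f·h^{p-1}(h² + |∇h|²)^{(n+1-q)/2}` in `C_θ`. -/
def SolvesEq (n : ℕ) (θ p q : ℝ) (f h : Euc n → ℝ) : Prop :=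
  ∀ ξ ∈ cap n θ, sdet n θ h ξ = eqRHS n θ p q f h ξ

/-- Robin boundary condition `∇_μ h = cot θ · h` on `∂C_θ`. -/
def RobinBC (n : ℕ) (θ : ℝ) (h : Euc n → ℝ) : Prop :=
  ∀ ξ ∈ capBdry n θ, ⟪sgrad n θ h ξ, conormal n θ ξ⟫ = Real.cot θ * h ξ

/-- `l(ξ) = sin²θ + cos θ·⟨ξ, e⟩`. -/
def lFun (n : ℕ) (θ : ℝ) (ξ : Euc n) : ℝ :=
  Real.sin θ ^ 2 + Real.cos θ * ⟪ξ, eVec n⟫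

/-- `‖f‖_{C⁰(C_θ)} ≤ K`. -/
def CZeroNormLe (n : ℕ) (θ : ℝ) (f : Euc n → ℝ) (K : ℝ) : Prop :=
  ∀ ξ ∈ cap n θ, |f ξ| ≤ K

/-- `‖f‖_{C¹(C_θ)} ≤ K`. -/
def COneNormLe (n : ℕ) (θ : ℝ) (f : Euc n → ℝ) (K : ℝ) : Prop :=
  CZeroNormLe n θ f K ∧ ∀ ξ ∈ cap n θ, ‖sgrad n θ f ξ‖ ≤ K

/-- `‖f‖_{C²(C_θ)} ≤ K`. -/
def CTwoNormLe (n : ℕ) (θ : ℝ) (f : Euc n → ℝ) (K : ℝ) : Prop :=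
  COneNormLe n θ f K ∧
    ∀ ξ ∈ cap n θ, ∀ X Y : Euc n, IsTangent n θ ξ X → IsTangent n θ ξ Y →
      |shess n θ f ξ X Y| ≤ K * ‖X‖ * ‖Y‖

/-- The linearized operator `L_h(γ)` of the equation `𝒢(∇²h,h) = 𝒥₁(∇h,h)` at `h`:
the derivative at `ε = 0` of `𝒢 - 𝒥₁` along the variation `h_ε = h·e^{εγ}`
(cf. equation (5.4) of the paper, which is exactly this derivative). -/
def linOp (n : ℕ) (θ p q : ℝ) (f h γ : Euc n → ℝ) (ξ : Euc n) : ℝ :=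
  deriv (fun ε : ℝ =>
    sdet n θ (fun x => h x * Real.exp (ε * γ x)) ξ
      - eqRHS n θ p q f (fun x => h x * Real.exp (ε * γ x)) ξ) 0

/-- Endomorphism acting as `l·∇²u + cos θ·(∇u ⊗ e^T + e^T ⊗ ∇u) + uσ` on the tangent space
and as the identity on the normal line. -/
def capillaryOp (n : ℕ) (θ : ℝ) (u : Euc n → ℝ) (ξ : Euc n) : Euc n →L[ℝ] Euc n :=
  lFun n θ ξ • thessOp n θ u ξ
    + Real.cos θ • ((innerSL ℝ (sgrad n θ u ξ)).smulRight (tproj n θ ξ (eVec n))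
        + (innerSL ℝ (tproj n θ ξ (eVec n))).smulRight (sgrad n θ u ξ))
    + u ξ • tproj n θ ξ + normalPart n θ ξ

/-- Endomorphism acting as `∇²v + ∇v ⊗ ∇v + σ` on the tangent space and as the identity on
the normal line. -/
def logOp (n : ℕ) (θ : ℝ) (v : Euc n → ℝ) (ξ : Euc n) : Euc n →L[ℝ] Euc n :=
  thessOp n θ v ξ + (innerSL ℝ (sgrad n θ v ξ)).smulRight (sgrad n θ v ξ)
    + tproj n θ ξ + normalPart n θ ξ

/-- Geodesic distance on `C_θ` from `ξ` to the top point `N = (0,…,0,1-cos θ)`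
(for `θ ∈ (0,π/2)` the cap is geodesically convex, so this is `arccos ⟨ν(ξ), ν(N)⟩`). -/
def distToTop (n : ℕ) (θ : ℝ) (ξ : Euc n) : ℝ :=
  Real.arccos (ξ (Fin.last n) + Real.cos θ)

/-- The function `d := d_N²/(2θ)`. -/
def dCap (n : ℕ) (θ : ℝ) (ξ : Euc n) : ℝ := distToTop n θ ξ ^ 2 / (2 * θ)


/-! ### Auxiliary lemmas -/

lemma inner_eVec_self (n : ℕ) : ⟪eVec n, eVec n⟫ = 1 := by
  simp [eVec, EuclideanSpace.inner_single_left, EuclideanSpace.single_apply]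

lemma inner_eVec {n : ℕ} (x : Euc n) : ⟪x, eVec n⟫ = -(x (Fin.last n)) := by
  simp [eVec, EuclideanSpace.inner_single_right]

lemma bdry_inner_e {n : ℕ} {θ : ℝ} {x : Euc n} (hx : x ∈ capBdry n θ) :
    ⟪x, eVec n⟫ = 0 := by
  rw [inner_eVec, hx.1, neg_zero]

lemma bdry_inner_self {n : ℕ} {θ : ℝ} {x : Euc n} (hx : x ∈ capBdry n θ) :
    ⟪x, x⟫ = sin θ ^ 2 := by
  have h1 : ⟪sphNormal n θ x, sphNormal n θ x⟫ = 1 := by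
    rw [real_inner_self_eq_norm_sq, hx.2]; norm_num
  have h2 := bdry_inner_e hx
  have h2' : ⟪eVec n, x⟫ = 0 := by rw [real_inner_comm]; exact h2
  have h3 := inner_eVec_self n
  simp only [sphNormal, inner_sub_left, inner_sub_right, real_inner_smul_left,
    real_inner_smul_right, h2, h2', h3] at h1
  nlinarith [Real.sin_sq_add_cos_sq θ]

lemma bdry_inner_nu_mu {n : ℕ} {θ : ℝ} {x : Euc n} (hs : Real.sin θ ≠ 0)
    (hx : x ∈ capBdry n θ) : ⟪sphNormal n θ x, conormal n θ x⟫ = 0 := by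
  have h2 := bdry_inner_e hx
  have h2' : ⟪eVec n, x⟫ = 0 := by rw [real_inner_comm]; exact h2
  have h3 := inner_eVec_self n
  have h4 := bdry_inner_self hx
  simp only [sphNormal, conormal, inner_sub_left, inner_add_right, real_inner_smul_left,
    real_inner_smul_right, h2, h2', h3, h4, Real.cot_eq_cos_div_sin]
  field_simp
  ring

lemma bdry_inner_e_mu {n : ℕ} {θ : ℝ} {x : Euc n} (hx : x ∈ capBdry n θ) :
    ⟪eVec n, conormal n θ x⟫ = Real.sin θ := by
  have h2' : ⟪eVec n, x⟫ = 0 := by rw [real_inner_comm]; exact bdry_inner_e hx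
  simp only [conormal, inner_add_right, real_inner_smul_right, h2', inner_eVec_self n]
  ring

lemma bdry_lFun {n : ℕ} {θ : ℝ} {x : Euc n} (hx : x ∈ capBdry n θ) :
    lFun n θ x = sin θ ^ 2 := by
  simp [lFun, bdry_inner_e hx]

lemma gradient_inner {n : ℕ} (f : Euc n → ℝ) (x v : Euc n) :
    ⟪gradient f x, v⟫ = fderiv ℝ f x v :=
  InnerProductSpace.toDual_symm_apply

lemma hasFDerivAt_lFun {n : ℕ} (θ : ℝ) (x : Euc n) :
    HasFDerivAt (lFun n θ) (Real.cos θ • innerSL ℝ (eVec n)) x := by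
  have : lFun n θ = fun y => Real.sin θ ^ 2 + Real.cos θ * (innerSL ℝ (eVec n) y) := by
    funext y; simp only [lFun, innerSL_apply_apply]; rw [real_inner_comm]
  rw [this]
  exact (((innerSL ℝ (eVec n)).hasFDerivAt).const_mul (Real.cos θ)).const_add _

lemma contDiff_grad {n : ℕ} {h : Euc n → ℝ} (hh : ContDiff ℝ 2 h) :
    ContDiff ℝ 1 (gradient h) := by
  have h1 : ContDiff ℝ 1 (fderiv ℝ h) := hh.fderiv_right (by norm_num)
  have h2 : ContDiff ℝ 1 (fun L : Euc n →L[ℝ] ℝ =>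
      (InnerProductSpace.toDual ℝ (Euc n)).symm L) :=
    (InnerProductSpace.toDual ℝ (Euc n)).symm.toContinuousLinearEquiv.contDiff
  exact h2.comp h1

lemma hasFDerivAt_linv {n : ℕ} (θ : ℝ) {x : Euc n} (hx : lFun n θ x ≠ 0) :
    HasFDerivAt (fun y => (lFun n θ y)⁻¹)
      ((-(lFun n θ x ^ 2)⁻¹) • (Real.cos θ • innerSL ℝ (eVec n))) x :=
  (hasDerivAt_inv hx).comp_hasFDerivAt x (hasFDerivAt_lFun θ x)

lemma hasFDerivAt_hdivl {n : ℕ} (θ : ℝ) {h : Euc n → ℝ} (hh : Differentiable ℝ h)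
    {x : Euc n} (hx : lFun n θ x ≠ 0) :
    HasFDerivAt (fun y => h y * (lFun n θ y)⁻¹)
      (h x • ((-(lFun n θ x ^ 2)⁻¹) • (Real.cos θ • innerSL ℝ (eVec n)))
        + (lFun n θ x)⁻¹ • fderiv ℝ h x) x :=
  ((hh x).hasFDerivAt).mul (hasFDerivAt_linv θ hx)

lemma gradient_hdivl {n : ℕ} (θ : ℝ) {h : Euc n → ℝ} (hh : Differentiable ℝ h)
    {x : Euc n} (hx : lFun n θ x ≠ 0) :
    gradient (fun y => h y * (lFun n θ y)⁻¹) x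
      = (lFun n θ x)⁻¹ • gradient h x
        - ((h x * Real.cos θ) * ((lFun n θ x)⁻¹ * (lFun n θ x)⁻¹)) • eVec n := by
  have hd := hasFDerivAt_hdivl θ hh hx
  apply ext_inner_right ℝ
  intro v
  rw [gradient_inner, hd.fderiv]
  simp only [ContinuousLinearMap.add_apply, ContinuousLinearMap.coe_smul', Pi.smul_apply,
    innerSL_apply_apply, smul_eq_mul, inner_sub_left, real_inner_smul_left]
  rw [gradient_inner]
  field_simp
  ring

lemma inner_tproj_of_tangent {n : ℕ} {θ : ℝ} {x v X : Euc n}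
    (hX : ⟪X, sphNormal n θ x⟫ = 0) : ⟪tproj n θ x v, X⟫ = ⟪v, X⟫ := by
  have hX' : ⟪sphNormal n θ x, X⟫ = 0 := by rw [real_inner_comm]; exact hX
  simp only [tproj, ContinuousLinearMap.sub_apply, ContinuousLinearMap.id_apply,
    ContinuousLinearMap.smulRight_apply, innerSL_apply_apply, inner_sub_left,
    real_inner_smul_left, hX', mul_zero, sub_zero]

lemma robin_grad {n : ℕ} {θ : ℝ} {h : Euc n → ℝ} (hR : RobinBC n θ h)
    (hs : Real.sin θ ≠ 0) {x : Euc n} (hx : x ∈ capBdry n θ) :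
    ⟪gradient h x, conormal n θ x⟫ = Real.cot θ * h x := by
  have h1 := hR x hx
  have h2 : ⟪conormal n θ x, sphNormal n θ x⟫ = 0 := by
    rw [real_inner_comm]; exact bdry_inner_nu_mu hs hx
  rw [sgrad, inner_tproj_of_tangent h2] at h1
  exact h1

lemma key_hess {n : ℕ} {θ : ℝ} (hθ : θ ∈ Set.Ioo 0 π) {h : Euc n → ℝ}
    (hh : ContDiff ℝ 2 h) (hR : RobinBC n θ h) {ξ : Euc n} (hξ : ξ ∈ capBdry n θ)
    {X : Euc n} (hXξ : ⟪X, ξ⟫ = 0) (hXe : ⟪X, eVec n⟫ = 0) :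
    ⟪(fderiv ℝ (gradient h) ξ) X, conormal n θ ξ⟫ = 0 := by
  have hs : Real.sin θ ≠ 0 := ne_of_gt (Real.sin_pos_of_pos_of_lt_pi hθ.1 hθ.2)
  rcases eq_or_ne X 0 with rfl | hX0
  · simp
  have hnX : ‖X‖ ≠ 0 := norm_ne_zero_iff.mpr hX0
  set Y : Euc n := (Real.sin θ / ‖X‖) • X with hYdef
  have hYe : ⟪Y, eVec n⟫ = 0 := by rw [hYdef, real_inner_smul_left, hXe, mul_zero]
  have hYξ : ⟪Y, ξ⟫ = 0 := by rw [hYdef, real_inner_smul_left, hXξ, mul_zero]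
  have hYY : ⟪Y, Y⟫ = Real.sin θ ^ 2 := by
    rw [hYdef, real_inner_smul_left, real_inner_smul_right, real_inner_self_eq_norm_sq]
    field_simp
  have hξe : ⟪ξ, eVec n⟫ = 0 := bdry_inner_e hξ
  have hξξ : ⟪ξ, ξ⟫ = Real.sin θ ^ 2 := bdry_inner_self hξ
  have hYlast : Y (Fin.last n) = 0 := by
    have h5 := inner_eVec Y
    rw [hYe] at h5
    linarith
  set c : ℝ → Euc n := fun t => Real.cos t • ξ + Real.sin t • Y with hcdef
  have hc0 : c 0 = ξ := by simp [hcdef]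
  have hcB : ∀ t, c t ∈ capBdry n θ := by
    intro t
    constructor
    · show (Real.cos t • ξ + Real.sin t • Y) (Fin.last n) = 0
      simp [PiLp.add_apply, PiLp.smul_apply, hξ.1, hYlast]
    · have hξY : ⟪ξ, Y⟫ = 0 := by rw [real_inner_comm]; exact hYξ
      have heξ : ⟪eVec n, ξ⟫ = 0 := by rw [real_inner_comm]; exact hξe
      have heY : ⟪eVec n, Y⟫ = 0 := by rw [real_inner_comm]; exact hYe
      have hsq : ⟪sphNormal n θ (c t), sphNormal n θ (c t)⟫ = 1 := by
        simp only [sphNormal, hcdef, inner_sub_left, inner_sub_right, inner_add_left,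
          inner_add_right, real_inner_smul_left, real_inner_smul_right, hξξ, hYY, hξY,
          hYξ, hξe, hYe, heξ, heY, inner_eVec_self]
        nlinarith [Real.sin_sq_add_cos_sq t, Real.sin_sq_add_cos_sq θ]
      rw [real_inner_self_eq_norm_sq] at hsq
      show ‖sphNormal n θ (c t)‖ = 1
      nlinarith [norm_nonneg (sphNormal n θ (c t)), hsq,
        sq_nonneg (‖sphNormal n θ (c t)‖ - 1)]
  have hc' : HasDerivAt c Y 0 := by
    have h1 := (Real.hasDerivAt_cos 0).smul_const ξ
    have h2 := (Real.hasDerivAt_sin 0).smul_const Y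
    have h3 := h1.add h2
    simp only [Real.sin_zero, Real.cos_zero, neg_zero, zero_smul, one_smul, zero_add] at h3
    exact h3
  have hgdiff : HasFDerivAt (gradient h) (fderiv ℝ (gradient h) ξ) (c 0) := by
    rw [hc0]
    exact (((contDiff_grad hh).differentiable one_ne_zero) ξ).hasFDerivAt
  have hgc := hgdiff.comp_hasDerivAt 0 hc'
  have hhd : HasFDerivAt h (fderiv ℝ h ξ) (c 0) := by
    rw [hc0]
    exact ((hh.differentiable (by norm_num)) ξ).hasFDerivAt
  have hhc := hhd.comp_hasDerivAt 0 hc'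
  have hmuc : HasDerivAt (fun t => conormal n θ (c t)) (Real.cot θ • Y) 0 := by
    have h4 := (hc'.const_smul (Real.cot θ)).add_const (Real.sin θ • eVec n)
    exact h4
  have hFd := (HasDerivAt.inner ℝ hgc hmuc).sub (hhc.const_mul (Real.cot θ))
  have hDeq : deriv (fun t => ⟪gradient h (c t), conormal n θ (c t)⟫
      - Real.cot θ * h (c t)) 0
      = (⟪gradient h (c 0), Real.cot θ • Y⟫
          + ⟪(fderiv ℝ (gradient h) ξ) Y, conormal n θ (c 0)⟫)
        - Real.cot θ * (fderiv ℝ h ξ) Y := hFd.deriv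
  have hFzero : (fun t => ⟪gradient h (c t), conormal n θ (c t)⟫
      - Real.cot θ * h (c t)) = fun _ => (0 : ℝ) := by
    funext t
    rw [robin_grad hR hs (hcB t), sub_self]
  rw [hFzero, deriv_const, hc0] at hDeq
  rw [real_inner_smul_right, ← gradient_inner] at hDeq
  have hY : ⟪(fderiv ℝ (gradient h) ξ) Y, conormal n θ ξ⟫ = 0 := by linarith
  rw [hYdef, map_smul, real_inner_smul_left] at hY
  have hcoef : Real.sin θ / ‖X‖ ≠ 0 := div_ne_zero hs hnX
  exact (mul_eq_zero.mp hY).resolve_left hcoef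


/-- Proposition 2.1, second part: if `h ∈ C²(C_θ)` satisfies
`∇_μ h = cot θ · h` on `∂C_θ` and `u := h/l`, then `∇_μ u = 0` on `∂C_θ` and along `∂C_θ`,
`∇²u(e_k, e_n) = -cot θ · ∇_{e_k} u` for every frame vector `e_k` tangent to `∂C_θ`
(equivalently, for every tangent vector `X` orthogonal to `μ`), where `e_n = μ`. -/
theorem capillary_support_function_boundary_identities
    (n : ℕ) (hn : 2 ≤ n) (θ : ℝ) (hθ : θ ∈ Set.Ioo 0 π)
    (h : Euc n → ℝ) (hh : ContDiff ℝ 2 h) (hR : RobinBC n θ h) :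
    ∀ ξ ∈ capBdry n θ,
      ⟪sgrad n θ (fun x => h x / lFun n θ x) ξ, conormal n θ ξ⟫ = 0 ∧
      ∀ X : Euc n, IsTangent n θ ξ X → ⟪X, conormal n θ ξ⟫ = 0 →
        shess n θ (fun x => h x / lFun n θ x) ξ X (conormal n θ ξ) =
          -Real.cot θ * ⟪sgrad n θ (fun x => h x / lFun n θ x) ξ, X⟫ := by
  intro ξ hξ
  have hs : Real.sin θ ≠ 0 := ne_of_gt (Real.sin_pos_of_pos_of_lt_pi hθ.1 hθ.2)
  have hueq : (fun x => h x / lFun n θ x) = fun x => h x * (lFun n θ x)⁻¹ := by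
    funext x; rw [div_eq_mul_inv]
  rw [hueq]
  have hdh : Differentiable ℝ h := hh.differentiable (by norm_num)
  have hl : lFun n θ ξ = Real.sin θ ^ 2 := bdry_lFun hξ
  have hlne : lFun n θ ξ ≠ 0 := by rw [hl]; exact pow_ne_zero 2 hs
  have hgradu : gradient (fun y => h y * (lFun n θ y)⁻¹) ξ
      = (lFun n θ ξ)⁻¹ • gradient h ξ
        - ((h ξ * Real.cos θ) * ((lFun n θ ξ)⁻¹ * (lFun n θ ξ)⁻¹)) • eVec n :=
    gradient_hdivl θ hdh hlne
  have hemu : ⟪eVec n, conormal n θ ξ⟫ = Real.sin θ := bdry_inner_e_mu hξ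
  have hghmu : ⟪gradient h ξ, conormal n θ ξ⟫ = Real.cot θ * h ξ := robin_grad hR hs hξ
  have hnumu : ⟪conormal n θ ξ, sphNormal n θ ξ⟫ = 0 := by
    rw [real_inner_comm]; exact bdry_inner_nu_mu hs hξ
  constructor
  · rw [sgrad, inner_tproj_of_tangent hnumu, hgradu, inner_sub_left, real_inner_smul_left,
      real_inner_smul_left, hghmu, hemu, hl, Real.cot_eq_cos_div_sin]
    field_simp
    ring
  · intro X hX hXmu
    have hXn : ⟪X, sphNormal n θ ξ⟫ = 0 := hX
    have h1 : ⟪X, ξ⟫ - Real.cos θ * ⟪X, eVec n⟫ = 0 := by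
      rw [sphNormal, inner_sub_right, real_inner_smul_right] at hXn
      linarith
    have h2 : Real.cot θ * ⟪X, ξ⟫ + Real.sin θ * ⟪X, eVec n⟫ = 0 := by
      rw [conormal, inner_add_right, real_inner_smul_right, real_inner_smul_right] at hXmu
      linarith
    have hXe : ⟪X, eVec n⟫ = 0 := by
      set a := ⟪X, ξ⟫ with ha
      set b := ⟪X, eVec n⟫ with hb
      have h2' : Real.cos θ * a + Real.sin θ ^ 2 * b = 0 := by
        have h6 : Real.sin θ * (Real.cot θ * a + Real.sin θ * b) = 0 := by
          rw [h2, mul_zero]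
        rw [Real.cot_eq_cos_div_sin] at h6
        field_simp at h6
        nlinarith [h6]
      have h4 : Real.cos θ * (a - Real.cos θ * b) = 0 := by
        rw [h1, mul_zero]
      have hsc' : (Real.sin θ ^ 2 + Real.cos θ ^ 2) * b = b := by
        rw [Real.sin_sq_add_cos_sq, one_mul]
      nlinarith [h4, h2', hsc']
    have hXξ : ⟪X, ξ⟫ = 0 := by rw [hXe] at h1; linarith
    have hXeμ : ⟪eVec n, X⟫ = 0 := by rw [real_inner_comm]; exact hXe
    have hkey := key_hess hθ hh hR hξ hXξ hXe
    have hlc : Continuous (lFun n θ) :=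
      continuous_iff_continuousAt.mpr fun x => (hasFDerivAt_lFun θ x).continuousAt
    have hgrad_diff : HasFDerivAt (gradient h) (fderiv ℝ (gradient h) ξ) ξ :=
      (((contDiff_grad hh).differentiable one_ne_zero) ξ).hasFDerivAt
    have hinv := hasFDerivAt_linv θ hlne
    have hterm1 := hinv.smul hgrad_diff
    have hsc2 := ((hdh ξ).hasFDerivAt.mul_const (Real.cos θ)).mul (hinv.mul hinv)
    have hterm2 := hsc2.smul (hasFDerivAt_const (eVec n) ξ)
    have hGd := hterm1.sub hterm2
    have hEv2 : (gradient fun y => h y * (lFun n θ y)⁻¹) =ᶠ[nhds ξ]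
        (fun y => (lFun n θ y)⁻¹ • gradient h y
          - ((h y * Real.cos θ) * ((lFun n θ y)⁻¹ * (lFun n θ y)⁻¹)) • eVec n) := by
      filter_upwards [hlc.continuousAt.eventually_ne hlne] with y hy
      exact gradient_hdivl θ hdh hy
    have hGu := hGd.congr_of_eventuallyEq hEv2
    rw [shess, hXmu, mul_zero, sub_zero, hGu.fderiv]
    rw [sgrad, inner_tproj_of_tangent hXn, hgradu]
    simp only [ContinuousLinearMap.sub_apply, ContinuousLinearMap.add_apply,
      ContinuousLinearMap.coe_smul', Pi.smul_apply, ContinuousLinearMap.smulRight_apply,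
      ContinuousLinearMap.smul_apply, ContinuousLinearMap.zero_apply, innerSL_apply_apply,
      smul_eq_mul, inner_sub_left, inner_add_left, real_inner_smul_left, hXeμ, hkey,
      hemu, hghmu, mul_zero, zero_mul, sub_zero, zero_add, add_zero, inner_zero_left,
      smul_zero, zero_smul, Pi.mul_apply]
    rw [gradient_inner, hl, Real.cot_eq_cos_div_sin]
    field_simp
    ring
end
end

section
/- Let θ ∈ (0, π) and let h be a positive solution of det(∇²h + hσ) = f·h^{p-1}(h² + |∇h|²)^{(n+1-q)/2} in C_θ with ∇_μ h = cot θ · h on ∂C_θ. Then the capillary support function u := h/l satisfies det( l·∇²u + cos θ·(∇u ⊗ e^T + e^T ⊗ ∇u) + u·σ ) = f·(ul)^{p-1}·((ul)² + |∇(ul)|²)^{(n+1-q)/2} in C_θ and ∇_μ u = 0 on ∂C_θ, where e^T denotes the tangential projection of the vector e onto the tangent space of C_θ. -/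
/- Formalization of statements from "The L_p dual Minkowski problem for capillary
hypersurfaces".

We work in the ambient space `ℝ^{n+1}`.  The spherical cap `C_θ` is the part of the unit
sphere centred at `cos θ • e` (where `e = -E_{n+1}`) lying in the closed upper half-space.
Functions on `C_θ` are represented by ambient functions `h : Euc n → ℝ`; the intrinsic
(round-metric) gradient `∇h` and Hessian `∇²h` of the restriction of `h` to `C_θ` are
expressed through ambient derivatives (for tangential arguments these expressions depend
only on the restriction of `h` to the cap).  The quantity `det(∇²h + hσ)` is encoded as the
determinant of the endomorphism of `ℝ^{n+1}` acting as `∇²h + hσ` on the tangent space of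
the cap and as the identity on the normal line. -/

open Real Set
open scoped RealInnerProductSpace

noncomputable section

/-! ### Auxiliary lemmas -/

section Aux

open InnerProductSpace Filter

lemma aux_inner_eVec_self (n : ℕ) : ⟪eVec n, eVec n⟫ = (1:ℝ) := by
  simp [eVec, EuclideanSpace.inner_single_right, EuclideanSpace.single_apply]

lemma aux_inner_eVec (n : ℕ) (x : Euc n) : ⟪x, eVec n⟫ = -(x (Fin.last n)) := by
  simp [eVec, EuclideanSpace.inner_single_right]

lemma aux_contDiff_lFun (n : ℕ) (θ : ℝ) : ContDiff ℝ ⊤ (lFun n θ) := by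
  have h2 : ContDiff ℝ ⊤ (fun x : Euc n =>
      Real.sin θ ^ 2 + Real.cos θ * (innerSL ℝ (eVec n)) x) :=
    contDiff_const.add (contDiff_const.mul (innerSL ℝ (eVec n)).contDiff)
  convert h2 using 2 with x
  simp [lFun, real_inner_comm, mul_comm]

lemma aux_hasGradientAt_lFun (n : ℕ) (θ : ℝ) (x : Euc n) :
    HasGradientAt (lFun n θ) (Real.cos θ • eVec n) x := by
  rw [hasGradientAt_iff_hasFDerivAt]
  have h1 : HasFDerivAt (fun y : Euc n => Real.sin θ ^ 2 + Real.cos θ * (innerSL ℝ (eVec n)) y)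
      (Real.cos θ • (innerSL ℝ (eVec n))) x := by
    simpa using (((innerSL ℝ (eVec n)).hasFDerivAt (x := x)).const_mul (Real.cos θ)).const_add
      (Real.sin θ ^ 2)
  convert h1 using 1
  · rfl
  · rfl
  · funext y; simp [lFun, real_inner_comm, mul_comm]
  · ext y
    simp [InnerProductSpace.toDual_apply_apply, real_inner_smul_left]

lemma aux_lFun_pos {n : ℕ} {θ : ℝ} (hθ : θ ∈ Set.Ioo 0 π) {ξ : Euc n}
    (hξ : ξ ∈ cap n θ) : 0 < lFun n θ ξ := by
  obtain ⟨ht, hν⟩ := hξ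
  have hsin : 0 < Real.sin θ := Real.sin_pos_of_pos_of_lt_pi hθ.1 hθ.2
  have hl : lFun n θ ξ = Real.sin θ ^ 2 - Real.cos θ * ξ (Fin.last n) := by
    rw [lFun, aux_inner_eVec]; ring
  rcases le_or_gt (Real.cos θ) 0 with hc | hc
  · rw [hl]
    have : Real.cos θ * ξ (Fin.last n) ≤ 0 := mul_nonpos_of_nonpos_of_nonneg hc ht
    nlinarith [sq_nonneg (Real.sin θ)]
  · -- cos θ > 0; from ‖ν‖ = 1 deduce ξ (last n) ≤ 1 - cos θ
    have hnorm : ‖ξ - Real.cos θ • eVec n‖ ^ 2 = 1 := by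
      rw [sphNormal] at hν; rw [hν]; norm_num
    have hexp : ‖ξ‖ ^ 2 + 2 * Real.cos θ * ξ (Fin.last n) + Real.cos θ ^ 2 = 1 := by
      have := norm_sub_sq_real ξ (Real.cos θ • eVec n)
      rw [hnorm] at this
      have he : ‖Real.cos θ • eVec n‖ ^ 2 = Real.cos θ ^ 2 := by
        rw [norm_smul]
        have : ‖eVec n‖ = 1 := by
          have := aux_inner_eVec_self n
          have h2 := real_inner_self_eq_norm_sq (eVec n)
          nlinarith [norm_nonneg (eVec n)]
        simp [this, abs_mul_abs_self, mul_pow, sq_abs]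
      rw [real_inner_smul_right, aux_inner_eVec] at this
      nlinarith
    have hcoord : ξ (Fin.last n) ^ 2 ≤ ‖ξ‖ ^ 2 := by
      have h1 : |⟪ξ, EuclideanSpace.single (Fin.last n) (1:ℝ)⟫| ≤
          ‖ξ‖ * ‖EuclideanSpace.single (Fin.last n) (1:ℝ)‖ := abs_real_inner_le_norm _ _
      rw [EuclideanSpace.inner_single_right, EuclideanSpace.norm_single] at h1
      simp only [norm_one, mul_one, one_mul, conj_trivial] at h1
      calc ξ (Fin.last n) ^ 2 = |ξ (Fin.last n)| ^ 2 := (sq_abs _).symm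
        _ ≤ ‖ξ‖ ^ 2 := by
            have : (0:ℝ) ≤ ‖ξ‖ := norm_nonneg _
            nlinarith [h1, abs_nonneg (ξ (Fin.last n))]
    have h2 : (ξ (Fin.last n) + Real.cos θ) ^ 2 ≤ 1 := by nlinarith
    have h3 : ξ (Fin.last n) + Real.cos θ ≤ 1 := by nlinarith
    rw [hl]
    have hs := Real.sin_sq_add_cos_sq θ
    nlinarith

lemma aux_toDual_gradient {n : ℕ} (f : Euc n → ℝ) (x : Euc n) :
    InnerProductSpace.toDual ℝ (Euc n) (gradient f x) = fderiv ℝ f x := by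
  simp [gradient]

lemma aux_fderiv_inner_gradient {n : ℕ} (f : Euc n → ℝ) (x y : Euc n) :
    fderiv ℝ f x y = ⟪gradient f x, y⟫ := by
  rw [← aux_toDual_gradient, InnerProductSpace.toDual_apply_apply]

lemma aux_hasGradientAt_mul {n : ℕ} {f g : Euc n → ℝ} {a b x : Euc n}
    (hf : HasGradientAt f a x) (hg : HasGradientAt g b x) :
    HasGradientAt (fun y => f y * g y) (f x • b + g x • a) x := by
  rw [hasGradientAt_iff_hasFDerivAt] at hf hg ⊢
  have := hf.mul hg
  convert this using 1
  · rfl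
  · rfl
  ext y
  simp [InnerProductSpace.toDual_apply_apply, inner_add_left, real_inner_smul_left]

lemma aux_differentiableAt_gradient {n : ℕ} {f : Euc n → ℝ} {x : Euc n}
    (hf : ContDiffAt ℝ 2 f x) : DifferentiableAt ℝ (gradient f) x := by
  have h2 : DifferentiableAt ℝ (fderiv ℝ f) x :=
    (hf.fderiv_right (m := 1) (by norm_num)).differentiableAt one_ne_zero
  let L : (Euc n →L[ℝ] ℝ) →ₗ[ℝ] Euc n :=
    { toFun := fun φ => (InnerProductSpace.toDual ℝ (Euc n)).symm φ
      map_add' := fun φ ψ => by simp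
      map_smul' := fun c φ => by
        simp only [RingHom.id_apply]
        simpa [starRingEnd_apply] using
          (InnerProductSpace.toDual ℝ (Euc n)).symm.map_smulₛₗ c φ }
  have hL : Continuous L := (InnerProductSpace.toDual ℝ (Euc n)).symm.continuous
  let Lc : (Euc n →L[ℝ] ℝ) →L[ℝ] Euc n := { toLinearMap := L, cont := hL }
  have h3 : DifferentiableAt ℝ (fun y => Lc (fderiv ℝ f y)) x :=
    (Lc.hasFDerivAt.comp x h2.hasFDerivAt).differentiableAt
  exact h3


lemma aux_lFun_ne_nhds {n : ℕ} {θ : ℝ} {ξ : Euc n} (hl : lFun n θ ξ ≠ 0) :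
    ∀ᶠ x in nhds ξ, lFun n θ x ≠ 0 :=
  (aux_contDiff_lFun n θ).continuous.continuousAt.eventually_ne hl

lemma aux_ev_eq {n : ℕ} {θ : ℝ} (h : Euc n → ℝ) {ξ : Euc n} (hl : lFun n θ ξ ≠ 0) :
    (fun x => (h x / lFun n θ x) * lFun n θ x) =ᶠ[nhds ξ] h :=
  (aux_lFun_ne_nhds hl).mono fun x hx => div_mul_cancel₀ _ hx

lemma aux_gradient_h_eq {n : ℕ} {θ : ℝ} (h : Euc n → ℝ) (hh : ContDiff ℝ 2 h) {ξ : Euc n}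
    (hl : lFun n θ ξ ≠ 0) :
    gradient h ξ = lFun n θ ξ • gradient (fun x => h x / lFun n θ x) ξ
      + (Real.cos θ * (h ξ / lFun n θ ξ)) • eVec n := by
  have hdh : DifferentiableAt ℝ h ξ := (hh.differentiable two_ne_zero) ξ
  have hdl : DifferentiableAt ℝ (lFun n θ) ξ := ((aux_contDiff_lFun n θ).differentiable (by simp)) ξ
  have hu : DifferentiableAt ℝ (fun x => h x / lFun n θ x) ξ := (hh.contDiffAt.div ((aux_contDiff_lFun n θ).contDiffAt.of_le le_top) hl).differentiableAt two_ne_zero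
  have h1 : HasGradientAt (fun x => (h x / lFun n θ x) * lFun n θ x)
      ((h ξ / lFun n θ ξ) • (Real.cos θ • eVec n)
        + lFun n θ ξ • gradient (fun x => h x / lFun n θ x) ξ) ξ :=
    aux_hasGradientAt_mul hu.hasGradientAt (aux_hasGradientAt_lFun n θ ξ)
  have h2 : HasGradientAt h
      ((h ξ / lFun n θ ξ) • (Real.cos θ • eVec n)
        + lFun n θ ξ • gradient (fun x => h x / lFun n θ x) ξ) ξ := by
    rw [hasGradientAt_iff_hasFDerivAt] at h1 ⊢
    exact h1.congr_of_eventuallyEq (aux_ev_eq h hl).symm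
  rw [h2.gradient]
  module

lemma aux_tproj_apply {n : ℕ} {θ : ℝ} (ξ X : Euc n) :
    tproj n θ ξ X = X - ⟪sphNormal n θ ξ, X⟫ • sphNormal n θ ξ := by
  simp [tproj]

lemma aux_tproj_symm {n : ℕ} {θ : ℝ} (ξ a b : Euc n) :
    ⟪tproj n θ ξ a, b⟫ = ⟪a, tproj n θ ξ b⟫ := by
  rw [aux_tproj_apply, aux_tproj_apply, inner_sub_left, inner_sub_right,
    real_inner_smul_left, real_inner_smul_right,
    real_inner_comm a (sphNormal n θ ξ)]
  ring

lemma aux_cos_inner_eVec_normal {n : ℕ} (θ : ℝ) (ξ : Euc n) :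
    Real.cos θ * ⟪eVec n, sphNormal n θ ξ⟫ = lFun n θ ξ - 1 := by
  rw [sphNormal, inner_sub_right, real_inner_smul_right, aux_inner_eVec_self, lFun,
    real_inner_comm ξ (eVec n)]
  linear_combination (-1 : ℝ) * Real.sin_sq_add_cos_sq θ

lemma aux_fderiv_gradient_h {n : ℕ} {θ : ℝ} (h : Euc n → ℝ) (hh : ContDiff ℝ 2 h) {ξ : Euc n}
    (hl : lFun n θ ξ ≠ 0) (Y : Euc n) :
    fderiv ℝ (gradient h) ξ Y =
      (Real.cos θ * ⟪eVec n, Y⟫) • gradient (fun x => h x / lFun n θ x) ξ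
      + lFun n θ ξ • fderiv ℝ (gradient (fun x => h x / lFun n θ x)) ξ Y
      + (Real.cos θ * ⟪gradient (fun x => h x / lFun n θ x) ξ, Y⟫) • eVec n := by
  have hu2 : ContDiffAt ℝ 2 (fun x => h x / lFun n θ x) ξ :=
    hh.contDiffAt.div ((aux_contDiff_lFun n θ).contDiffAt.of_le le_top) hl
  have hgu : DifferentiableAt ℝ (gradient (fun x => h x / lFun n θ x)) ξ :=
    aux_differentiableAt_gradient hu2
  have hev : gradient h =ᶠ[nhds ξ] fun x =>
      lFun n θ x • gradient (fun y => h y / lFun n θ y) x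
        + (Real.cos θ * (h x / lFun n θ x)) • eVec n := by
    filter_upwards [aux_lFun_ne_nhds hl] with x hx
    exact aux_gradient_h_eq h hh hx
  have t1 : HasFDerivAt (lFun n θ)
      (InnerProductSpace.toDual ℝ (Euc n) (Real.cos θ • eVec n)) ξ :=
    (hasGradientAt_iff_hasFDerivAt.mp (aux_hasGradientAt_lFun n θ ξ))
  have t2 : HasFDerivAt (gradient (fun x => h x / lFun n θ x))
      (fderiv ℝ (gradient (fun x => h x / lFun n θ x)) ξ) ξ := hgu.hasFDerivAt
  have T1 := t1.smul t2
  have t3 : HasFDerivAt (fun x => h x / lFun n θ x)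
      (fderiv ℝ (fun x => h x / lFun n θ x) ξ) ξ :=
    (hu2.differentiableAt two_ne_zero).hasFDerivAt
  have t4 := t3.const_mul (Real.cos θ)
  have T2 := t4.smul (hasFDerivAt_const (eVec n) ξ)
  have hder := T1.add T2
  have hfd : fderiv ℝ (gradient h) ξ = _ := hev.fderiv_eq.trans hder.fderiv
  rw [hfd]
  simp only [ContinuousLinearMap.add_apply, ContinuousLinearMap.smul_apply,
    ContinuousLinearMap.smulRight_apply, ContinuousLinearMap.zero_apply,
    InnerProductSpace.toDual_apply_apply, real_inner_smul_left,
    aux_fderiv_inner_gradient, smul_zero, smul_eq_mul]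
  module


lemma aux_capOp_eq {n : ℕ} {θ : ℝ} (h : Euc n → ℝ) (hh : ContDiff ℝ 2 h) {ξ : Euc n}
    (hl : lFun n θ ξ ≠ 0) :
    capillaryOp n θ (fun x => h x / lFun n θ x) ξ = hessOp n θ h ξ := by
  refine ContinuousLinearMap.ext fun X => ?_
  have hA := aux_fderiv_gradient_h h hh hl (tproj n θ ξ X)
  have hgh := aux_gradient_h_eq h hh hl
  obtain ⟨a, ha⟩ : ∃ a, h ξ / lFun n θ ξ = a := ⟨_, rfl⟩
  have hha : h ξ = a * lFun n θ ξ := by rw [← ha]; field_simp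
  simp only [capillaryOp, hessOp, thessOp, normalPart, sgrad,
    ContinuousLinearMap.add_apply, ContinuousLinearMap.sub_apply,
    ContinuousLinearMap.smul_apply, ContinuousLinearMap.coe_comp', Function.comp_apply,
    ContinuousLinearMap.smulRight_apply, innerSL_apply_apply]
  rw [hA, hgh, ha]
  simp only [map_add, map_smul, inner_add_left, real_inner_smul_left, aux_tproj_symm]
  rw [hha]
  match_scalars
  all_goals first
    | ring1
    | linear_combination (a : ℝ) * aux_cos_inner_eVec_normal θ ξ
lemma aux_sgrad_mul {n : ℕ} {θ : ℝ} (h : Euc n → ℝ) {ξ : Euc n} (hl : lFun n θ ξ ≠ 0) :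
    sgrad n θ (fun x => (h x / lFun n θ x) * lFun n θ x) ξ = sgrad n θ h ξ := by
  unfold sgrad
  congr 1
  unfold gradient
  rw [(aux_ev_eq h hl).fderiv_eq]

end Aux

/-- equation (3.4): if `h` is a positive solution of the Monge–Ampère
equation with Robin boundary condition, then the capillary support function `u := h/l`
satisfies `det(l∇²u + cos θ(∇u ⊗ e^T + e^T ⊗ ∇u) + uσ)
  = f·(ul)^{p-1}((ul)² + |∇(ul)|²)^{(n+1-q)/2}` in `C_θ` and `∇_μ u = 0` on `∂C_θ`. -/
theorem capillary_support_function_equation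
    (n : ℕ) (hn : 1 ≤ n) (θ p q : ℝ) (hθ : θ ∈ Set.Ioo 0 π)
    (f : Euc n → ℝ)
    (h : Euc n → ℝ) (hh : ContDiff ℝ 2 h) (hpos : PosOnCap n θ h)
    (heq : SolvesEq n θ p q f h) (hR : RobinBC n θ h) :
    (∀ ξ ∈ cap n θ,
      LinearMap.det (capillaryOp n θ (fun x => h x / lFun n θ x) ξ).toLinearMap =
        f ξ * ((fun x => h x / lFun n θ x) ξ * lFun n θ ξ) ^ (p - 1) *
          (((fun x => h x / lFun n θ x) ξ * lFun n θ ξ) ^ 2 +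
            ‖sgrad n θ (fun x => (h x / lFun n θ x) * lFun n θ x) ξ‖ ^ 2) ^
              (((n : ℝ) + 1 - q) / 2)) ∧
    (∀ ξ ∈ capBdry n θ,
      ⟪sgrad n θ (fun x => h x / lFun n θ x) ξ, conormal n θ ξ⟫ = 0) := by
  have hsin : Real.sin θ ≠ 0 := (Real.sin_pos_of_pos_of_lt_pi hθ.1 hθ.2).ne'
  constructor
  · intro ξ hξ
    have hl : lFun n θ ξ ≠ 0 := (aux_lFun_pos hθ hξ).ne'
    rw [aux_capOp_eq h hh hl]
    have hdet := heq ξ hξ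
    rw [sdet] at hdet
    rw [hdet, eqRHS, aux_sgrad_mul h hl]
    simp only []
    rw [div_mul_cancel₀ _ hl]
  · intro ξ hξ
    obtain ⟨hξ0, hν⟩ := hξ
    have hinner : ⟪ξ, eVec n⟫ = 0 := by rw [aux_inner_eVec, hξ0, neg_zero]
    have hinner' : ⟪eVec n, ξ⟫ = 0 := by rw [real_inner_comm]; exact hinner
    have hlξ : lFun n θ ξ = Real.sin θ ^ 2 := by rw [lFun, hinner]; ring
    have hl : lFun n θ ξ ≠ 0 := by rw [hlξ]; positivity
    have hee := aux_inner_eVec_self n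
    have hξξ : ⟪ξ, ξ⟫ = Real.sin θ ^ 2 := by
      have h1 : ‖ξ - Real.cos θ • eVec n‖ ^ 2 = 1 := by
        rw [sphNormal] at hν; rw [hν]; norm_num
      rw [norm_sub_sq_real, real_inner_smul_right, hinner, norm_smul] at h1
      have h2 : ‖eVec n‖ ^ 2 = 1 := by
        rw [← real_inner_self_eq_norm_sq, hee]
      have h3 : ⟪ξ, ξ⟫ = ‖ξ‖ ^ 2 := real_inner_self_eq_norm_sq ξ
      have h4 := Real.sin_sq_add_cos_sq θ
      simp only [Real.norm_eq_abs, mul_pow, sq_abs] at h1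
      nlinarith
    have hcot : Real.cot θ = Real.cos θ / Real.sin θ := Real.cot_eq_cos_div_sin θ
    have heμ : ⟪eVec n, conormal n θ ξ⟫ = Real.sin θ := by
      rw [conormal, inner_add_right, real_inner_smul_right, real_inner_smul_right,
        hinner', hee]
      ring
    have hνμ : ⟪sphNormal n θ ξ, conormal n θ ξ⟫ = 0 := by
      rw [sphNormal, inner_sub_left, real_inner_smul_left, heμ, conormal,
        inner_add_right, real_inner_smul_right, real_inner_smul_right, hξξ, hinner, hcot]
      field_simp
      ring
    have hRξ := hR ξ ⟨hξ0, hν⟩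
    rw [sgrad, aux_tproj_apply, inner_sub_left, real_inner_smul_left, hνμ,
      mul_zero, sub_zero, hcot] at hRξ
    have hgh := aux_gradient_h_eq h hh hl
    have hguμ : ⟪gradient h ξ, conormal n θ ξ⟫ =
        lFun n θ ξ * ⟪gradient (fun x => h x / lFun n θ x) ξ, conormal n θ ξ⟫
          + (Real.cos θ * (h ξ / lFun n θ ξ)) * ⟪eVec n, conormal n θ ξ⟫ := by
      rw [hgh, inner_add_left, real_inner_smul_left, real_inner_smul_left]
    rw [hRξ, heμ, hlξ] at hguμ
    rw [sgrad, aux_tproj_apply, inner_sub_left, real_inner_smul_left, hνμ,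
      mul_zero, sub_zero]
    have hs2 : Real.sin θ ^ 2 ≠ 0 := pow_ne_zero 2 hsin
    set G := ⟪gradient (fun x => h x / lFun n θ x) ξ, conormal n θ ξ⟫ with hG
    have key : Real.cos θ * (h ξ / Real.sin θ ^ 2) * Real.sin θ
        = Real.cos θ / Real.sin θ * h ξ := by
      field_simp
    rw [key] at hguμ
    have h5 : Real.sin θ ^ 2 * G = 0 := by linarith
    rcases mul_eq_zero.mp h5 with h6 | h6
    · exact absurd h6 hs2
    · exact h6
end
end
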